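/- arXiv:2201.01941 — 4 statements merged into one kernel-verified Lean document; each statement's English description precedes it below -/
import Mathlib

section
/- If f(s) = (1-s)^{1+ν} L(1/(1-s)) for 0 ≤ s < 1 where 0 < ν ≤ 1 and L is slowly varying at infinity, and additionally f''(1⁻) exists and is finite with f(1)=f'(1)=0, then ν = 1 and L(t) → f''(1⁻)/2 as t → ∞. -/
open Filter Set

/-- If `f(s) = (1-s)^{1+ν} L(1/(1-s))` on `[0,1)` with `0 < ν ≤ 1` and `L` slowly varying
at infinity, and moreover `f(s)/(1-s)^2 → c/2` as `s ↑ 1` (i.e. `f''(1⁻) = c` is finite,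
criticality `f(1) = f'(1) = 0`), then `ν = 1` and `L(t) → c/2` as `t → ∞`. -/
theorem stmt0 (f L : ℝ → ℝ) (ν c : ℝ) (hν : 0 < ν) (hν1 : ν ≤ 1)
    (hLpos : ∀ x > (0:ℝ), 0 < L x)
    (hSV : ∀ l > (0:ℝ), Tendsto (fun x => L (l * x) / L x) atTop (nhds 1))
    (hf : ∀ s : ℝ, 0 ≤ s → s < 1 → f s = (1 - s) ^ (1 + ν) * L (1 / (1 - s)))
    (hcrit : Tendsto (fun s => f s / (1 - s) ^ (2:ℕ)) (nhdsWithin 1 (Iio 1)) (nhds (c / 2))) :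
    ν = 1 ∧ Tendsto L atTop (nhds (c / 2)) := by
  set g : ℝ → ℝ := fun t => t ^ (1 - ν) * L t with hg
  -- map t ↦ 1 - 1/t sends atTop into nhdsWithin 1 (Iio 1)
  have hmap : Tendsto (fun t : ℝ => 1 - 1/t) atTop (nhdsWithin 1 (Iio 1)) := by
    apply tendsto_nhdsWithin_of_tendsto_nhds_of_eventually_within
    · have h0 : Tendsto (fun t : ℝ => 1/t) atTop (nhds 0) := by
        simpa [one_div] using tendsto_inv_atTop_zero
      simpa using (tendsto_const_nhds (x := (1:ℝ))).sub h0
    · filter_upwards [eventually_gt_atTop (0:ℝ)] with t ht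
      have : (0:ℝ) < 1/t := by positivity
      simp only [mem_Iio]; linarith
  -- key: g t → c/2
  have gA : Tendsto g atTop (nhds (c/2)) := by
    have h1 := hcrit.comp hmap
    apply h1.congr'
    filter_upwards [eventually_gt_atTop (1:ℝ)] with t ht
    have ht0 : (0:ℝ) < t := lt_trans one_pos ht
    have h1t : (0:ℝ) < 1/t := by positivity
    have hs0 : 0 ≤ 1 - 1/t := by
      have : 1/t ≤ 1 := by rw [div_le_one ht0]; exact ht.le
      linarith
    have hs1 : 1 - 1/t < 1 := by linarith
    simp only [Function.comp]
    rw [hf _ hs0 hs1]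
    have h11 : 1 - (1 - 1/t) = 1/t := by ring
    rw [h11, one_div_one_div]
    have e1 : (1/t:ℝ) ^ (1+ν) = t ^ (-(1+ν)) := by
      rw [one_div, Real.inv_rpow ht0.le, ← Real.rpow_neg ht0.le]
    have e2 : ((1/t:ℝ)) ^ (2:ℕ) = t ^ (-(2:ℝ)) := by
      rw [one_div, ← Real.rpow_natCast t⁻¹ 2, Real.inv_rpow ht0.le, ← Real.rpow_neg ht0.le]
      norm_num
    rw [e1, e2]
    rw [div_eq_iff (ne_of_gt (Real.rpow_pos_of_pos ht0 _))]
    show t ^ (-(1+ν)) * L t = t ^ (1-ν) * L t * t ^ (-(2:ℝ))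
    rw [mul_right_comm, ← Real.rpow_add ht0]
    congr 2
    ring
  have hgpos : ∀ t > (0:ℝ), 0 < g t := fun t ht =>
    mul_pos (Real.rpow_pos_of_pos ht _) (hLpos t ht)
  -- ratio g(2t)/g(t) → 2^(1-ν)
  have hr : Tendsto (fun t => g (2*t) / g t) atTop (nhds ((2:ℝ) ^ (1-ν))) := by
    have h2 := (tendsto_const_nhds (x := (2:ℝ) ^ (1-ν))).mul (hSV 2 two_pos)
    rw [mul_one] at h2
    apply h2.congr'
    filter_upwards [eventually_gt_atTop (0:ℝ)] with t ht
    have hLt := (hLpos t ht).ne'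
    have htp := (Real.rpow_pos_of_pos ht (1-ν)).ne'
    show (2:ℝ) ^ (1-ν) * (L (2*t) / L t) = (2*t) ^ (1-ν) * L (2*t) / (t ^ (1-ν) * L t)
    rw [Real.mul_rpow (by norm_num) ht.le]
    field_simp
  -- ν = 1
  have hν1' : ν = 1 := by
    by_contra hne
    have hlt : ν < 1 := lt_of_le_of_ne hν1 hne
    set r : ℝ := (2:ℝ) ^ (1-ν) with hrdef
    have hr1 : 1 < r := by
      rw [hrdef]
      exact Real.one_lt_rpow_iff_of_pos two_pos |>.2 (Or.inl ⟨one_lt_two, by linarith⟩)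
    set ρ : ℝ := (1 + r)/2 with hρdef
    have hρ1 : 1 < ρ := by rw [hρdef]; linarith
    have hρr : ρ < r := by rw [hρdef]; linarith
    have hev : ∀ᶠ t in atTop, ρ < g (2*t) / g t := hr.eventually (eventually_gt_nhds hρr)
    obtain ⟨T0, hT0⟩ := (hev.and (eventually_ge_atTop (1:ℝ))).exists_forall_of_atTop
    set T : ℝ := max T0 1 with hTdef
    have hT1 : (1:ℝ) ≤ T := le_max_right _ _
    have hTpos : (0:ℝ) < T := lt_of_lt_of_le one_pos hT1
    have hstep : ∀ t, T ≤ t → ρ * g t ≤ g (2*t) := by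
      intro t htT
      have ht0 : (0:ℝ) < t := lt_of_lt_of_le hTpos htT
      have := (hT0 t (le_trans (le_max_left _ _) htT)).1
      have := (lt_div_iff₀ (hgpos t ht0)).mp this
      linarith
    have hkey : ∀ n : ℕ, ρ ^ n * g T ≤ g (2^n * T) := by
      intro n
      induction n with
      | zero => simp
      | succ n ih =>
        have h2n : (1:ℝ) ≤ 2^n := one_le_pow₀ (by norm_num)
        have hTle : T ≤ 2^n * T := le_mul_of_one_le_left hTpos.le h2n
        have := hstep (2^n * T) hTle
        have h2 : (2:ℝ) * (2^n * T) = 2^(n+1) * T := by ring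
        rw [h2] at this
        have hρpos : (0:ℝ) < ρ := lt_trans one_pos hρ1
        calc ρ ^ (n+1) * g T = ρ * (ρ ^ n * g T) := by ring
          _ ≤ ρ * g (2^n * T) := by nlinarith [hgpos T hTpos]
          _ ≤ g (2^(n+1) * T) := this
    have htop : Tendsto (fun n : ℕ => g (2^n * T)) atTop atTop := by
      apply tendsto_atTop_mono hkey
      exact (tendsto_pow_atTop_atTop_of_one_lt hρ1).atTop_mul_const (hgpos T hTpos)
    have hnhds : Tendsto (fun n : ℕ => g (2^n * T)) atTop (nhds (c/2)) := by
      apply gA.comp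
      exact (tendsto_pow_atTop_atTop_of_one_lt (one_lt_two)).atTop_mul_const hTpos
    exact not_tendsto_atTop_of_tendsto_nhds hnhds htop
  refine ⟨hν1', ?_⟩
  have : g = L := by
    funext t
    simp [hg, hν1']
  rwa [this] at gA
end

section
/- Let F(t;s) solve ∂F/∂t = f(F), F(0;s)=s, on [0,∞), where f has a simple zero at q with f'(q) < 0 and f(u) > 0 for s ≤ u < q. Then R(t;s) := q − F(t;s) satisfies R(t;s) = A(t;s)·β^t where β = exp(f'(q)) and A(t;s) = (q−s)·exp(∫_s^{F(t;s)} [1/(u−q) − f'(q)/f(u)] du). -/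
open Filter Set intervalIntegral

/-- Let `F` solve `F' = f(F)`, `F(0) = s`, where `f` has a simple zero at `q` with
`f'(q) = c < 0` and `f(u) > 0` for `s ≤ u < q`. Then `R(t) := q − F(t)` satisfies
`R(t) = A(t)·β^t` where `β = exp(f'(q))` and
`A(t) = (q−s)·exp(∫_s^{F(t)} [1/(u−q) − f'(q)/f(u)] du)`. -/
theorem stmt2 (f F : ℝ → ℝ) (q s c : ℝ) (hs : 0 ≤ s) (hsq : s < q)
    (hfq : f q = 0) (hfq' : HasDerivAt f c q) (hc : c < 0)
    (hfpos : ∀ u, s ≤ u → u < q → 0 < f u)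
    (hF0 : F 0 = s)
    (hode : ∀ t : ℝ, 0 ≤ t → HasDerivAt F (f (F t)) t)
    (hmono : MonotoneOn F (Ici 0))
    (hrange : ∀ t : ℝ, 0 ≤ t → s ≤ F t ∧ F t < q)
    (hlim : Tendsto F atTop (nhds q)) :
    ∀ t : ℝ, 0 ≤ t →
      q - F t =
        ((q - s) * Real.exp (∫ u in s..F t, (1 / (u - q) - c / f u))) * Real.exp c ^ t := by
  -- continuity of F on [0,∞)
  have hFcont : ContinuousOn F (Ici 0) := fun t ht =>
    (hode t ht).continuousAt.continuousWithinAt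
  -- strict monotonicity of F on [0,∞)
  have hFmono : StrictMonoOn F (Ici 0) := by
    apply strictMonoOn_of_deriv_pos (convex_Ici 0) hFcont
    intro x hx
    rw [interior_Ici] at hx
    rw [(hode x hx.le).deriv]
    exact hfpos _ (hrange x hx.le).1 (hrange x hx.le).2
  -- surjectivity of F onto [s, q)
  have hsurj : ∀ u : ℝ, ∃ τ : ℝ, u ∈ Ico s q → (0 ≤ τ ∧ F τ = u) := by
    intro u
    by_cases hu : u ∈ Ico s q
    · obtain ⟨τ, hτu, hτ0⟩ :=
        ((hlim.eventually (eventually_gt_nhds hu.2)).and (eventually_ge_atTop 0)).exists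
      have : u ∈ Icc (F 0) (F τ) := ⟨hF0 ▸ hu.1, hτu.le⟩
      obtain ⟨x, hx, hFx⟩ := intermediate_value_Icc hτ0
        (hFcont.mono Icc_subset_Ici_self) this
      exact ⟨x, fun _ => ⟨hx.1, hFx⟩⟩
    · exact ⟨0, fun h => absurd h hu⟩
  choose T hT using hsurj
  have hT0 : ∀ u ∈ Ico s q, 0 ≤ T u := fun u hu => (hT u hu).1
  have hFT : ∀ u ∈ Ico s q, F (T u) = u := fun u hu => (hT u hu).2
  have hTF : ∀ τ : ℝ, 0 ≤ τ → T (F τ) = τ := by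
    intro τ hτ
    have hmem : F τ ∈ Ico s q := ⟨(hrange τ hτ).1, (hrange τ hτ).2⟩
    exact hFmono.injOn (hT0 _ hmem) hτ (hFT _ hmem)
  have hTs : T s = 0 := by rw [← hF0, hTF 0 le_rfl]
  -- continuity of T on [s, q)
  have hTcont : ∀ u₀ ∈ Ico s q, ContinuousWithinAt T (Ico s q) u₀ := by
    intro u₀ hu₀
    rw [Metric.continuousWithinAt_iff]
    intro ε hε
    set τ₀ := T u₀ with hτ₀
    have hτ₀0 : 0 ≤ τ₀ := hT0 _ hu₀
    have hFτ₀ : F τ₀ = u₀ := hFT _ hu₀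
    set l : ℝ := if ε ≤ τ₀ then F (τ₀ - ε) else u₀ - 1 with hl
    have hlu : l < u₀ := by
      rw [hl]; split_ifs with h
      · rw [← hFτ₀]
        exact hFmono (mem_Ici.2 (by linarith)) (mem_Ici.2 hτ₀0) (by linarith)
      · linarith
    have hub : u₀ < F (τ₀ + ε) := by
      rw [← hFτ₀]
      exact hFmono (mem_Ici.2 hτ₀0) (mem_Ici.2 (by linarith)) (by linarith)
    have hV : IsOpen (Ioo l (F (τ₀ + ε))) := isOpen_Ioo
    obtain ⟨δ, hδ, hball⟩ := Metric.isOpen_iff.1 hV u₀ ⟨hlu, hub⟩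
    refine ⟨δ, hδ, fun {z} hz hdz => ?_⟩
    have hzV : z ∈ Ioo l (F (τ₀ + ε)) := hball (Metric.mem_ball.2 hdz)
    have hTz0 : 0 ≤ T z := hT0 _ hz
    have hFTz : F (T z) = z := hFT _ hz
    have hup : T z < τ₀ + ε := by
      by_contra h
      push_neg at h
      have : F (τ₀ + ε) ≤ F (T z) := hmono (mem_Ici.2 (by linarith)) (mem_Ici.2 hTz0) h
      rw [hFTz] at this
      exact absurd hzV.2 (not_lt.2 this)
    have hlo : τ₀ - ε < T z := by
      by_cases h : ε ≤ τ₀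
      · by_contra hcon
        push_neg at hcon
        have : F (T z) ≤ F (τ₀ - ε) := hmono (mem_Ici.2 hTz0) (mem_Ici.2 (by linarith)) hcon
        rw [hFTz] at this
        have : z ≤ l := by rw [hl, if_pos h]; exact this
        exact absurd hzV.1 (not_lt.2 this)
      · push_neg at h; linarith
    rw [Real.dist_eq, abs_sub_lt_iff]
    constructor <;> linarith
  -- derivative of T on (s, q)
  have hTderiv : ∀ u ∈ Ioo s q, HasDerivAt T (f u)⁻¹ u := by
    intro u hu
    have humem : u ∈ Ico s q := Ioo_subset_Ico_self hu
    have hnhds : Ioo s q ∈ nhds u := isOpen_Ioo.mem_nhds hu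
    have hca : ContinuousAt T u :=
      (hTcont u humem).continuousAt (Filter.mem_of_superset hnhds Ioo_subset_Ico_self)
    have hF' : HasDerivAt F (f u) (T u) := by
      have := hode (T u) (hT0 _ humem)
      rwa [hFT _ humem] at this
    exact HasDerivAt.of_local_left_inverse hca hF' (hfpos u hu.1.le hu.2).ne'
      (Filter.eventually_of_mem hnhds fun z hz => hFT z (Ioo_subset_Ico_self hz))
  -- main argument for each t
  intro t ht
  set x := F t with hx
  have hsx : s ≤ x := (hrange t ht).1
  have hxq : x < q := (hrange t ht).2
  set H : ℝ → ℝ := fun u => Real.log (q - u) - c * T u with hH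
  have hHderiv : ∀ u ∈ Ioo s x, HasDerivAt H (1 / (u - q) - c / f u) u := by
    intro u hu
    have huq : u ∈ Ioo s q := ⟨hu.1, hu.2.trans hxq⟩
    have hqu : q - u ≠ 0 := (sub_pos.2 huq.2).ne'
    have huq2 : u - q ≠ 0 := (sub_neg.2 huq.2).ne
    have h1 : HasDerivAt (fun u => Real.log (q - u)) ((q - u)⁻¹ * -1) u :=
      (Real.hasDerivAt_log hqu).comp u ((hasDerivAt_id u).const_sub q)
    have he : (q - u)⁻¹ * -1 = 1 / (u - q) := by
      field_simp
      ring
    rw [he] at h1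
    have h2 : HasDerivAt (fun u => c * T u) (c * (f u)⁻¹) u := (hTderiv u huq).const_mul c
    exact h1.sub h2
  have hIccsub : Icc s x ⊆ Ico s q := fun u hu => ⟨hu.1, lt_of_le_of_lt hu.2 hxq⟩
  have hTcontIcc : ContinuousOn T (Icc s x) := fun u hu =>
    ((hTcont u (hIccsub hu)).mono hIccsub)
  have hHcont : ContinuousOn H (Icc s x) := by
    apply ContinuousOn.sub
    · apply ContinuousOn.log (continuous_const.sub continuous_id).continuousOn
      intro u hu
      have : u < q := lt_of_le_of_lt hu.2 hxq
      exact (sub_pos.2 this).ne'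
    · exact continuousOn_const.mul hTcontIcc
  -- integrability of the integrand
  have hint : IntervalIntegrable (fun u => 1 / (u - q) - c / f u) MeasureTheory.volume s x := by
    have h1 : IntervalIntegrable (fun u => 1 / (u - q)) MeasureTheory.volume s x := by
      apply ContinuousOn.intervalIntegrable
      apply ContinuousOn.div continuousOn_const (continuous_id.sub continuous_const).continuousOn
      intro u hu
      rw [uIcc_of_le hsx] at hu
      have : u < q := lt_of_le_of_lt hu.2 hxq
      exact (sub_neg.2 this).ne
    have h2 : IntervalIntegrable (fun u => -(c / f u)) MeasureTheory.volume s x := by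
      apply intervalIntegrable_deriv_of_nonneg (g := fun u => -(c * T u))
      · rw [uIcc_of_le hsx]
        exact (continuousOn_const.mul hTcontIcc).neg
      · intro u hu
        rw [min_eq_left hsx, max_eq_right hsx] at hu
        have huq : u ∈ Ioo s q := ⟨hu.1, hu.2.trans hxq⟩
        exact ((hTderiv u huq).const_mul c).neg
      · intro u hu
        rw [min_eq_left hsx, max_eq_right hsx] at hu
        have huq : u ∈ Ioo s q := ⟨hu.1, hu.2.trans hxq⟩
        have := hfpos u huq.1.le huq.2
        have : 0 ≤ (-c) / f u := div_nonneg (by linarith) this.le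
        rw [neg_div] at this
        linarith
    exact h1.add h2
  -- FTC
  have hFTC : (∫ u in s..x, (1 / (u - q) - c / f u)) = H x - H s :=
    integral_eq_sub_of_hasDeriv_right_of_le hsx hHcont
      (fun u hu => (hHderiv u hu).hasDerivWithinAt) hint
  have hTx : T x = t := hTF t ht
  have hHval : (∫ u in s..x, (1 / (u - q) - c / f u))
      = Real.log (q - x) - Real.log (q - s) - c * t := by
    rw [hFTC, hH]; simp only [hTx, hTs]; ring
  -- final computation
  have hqx : 0 < q - x := by linarith
  have hqs : 0 < q - s := by linarith
  have hpow : Real.exp c ^ t = Real.exp (c * t) := (Real.exp_mul c t).symm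
  rw [hHval, hpow, mul_assoc, ← Real.exp_add]
  have : Real.log (q - x) - Real.log (q - s) - c * t + c * t
      = Real.log ((q - x) / (q - s)) := by
    rw [Real.log_div hqx.ne' hqs.ne']; ring
  rw [this, Real.exp_log (div_pos hqx hqs)]
  field_simp
end

section
/- Let ℓ be slowly varying at infinity and locally bounded on [A,∞) for some A > 0. Then for every λ > −1, ∫_A^x u^λ ℓ(u) du ∼ x^{λ+1} ℓ(x)/(λ+1) as x → ∞. -/
open Filter Set intervalIntegral
open MeasureTheory

lemma karamata_uct (h : ℝ → ℝ) (hm : Measurable h)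
    (hconv : ∀ u : ℝ, Tendsto (fun x => h (x + u) - h x) atTop (nhds 0)) :
    ∀ ε : ℝ, 0 < ε → ∃ X : ℝ, ∀ x, X ≤ x → ∀ t ∈ Icc (0:ℝ) 1, |h (x + t) - h x| ≤ ε := by
  intro ε hε
  by_contra hcon
  push_neg at hcon
  have H : ∀ k : ℕ, ∃ x, (k:ℝ) ≤ x ∧ ∃ t, t ∈ Icc (0:ℝ) 1 ∧ ε < |h (x + t) - h x| := fun k =>
    hcon k
  choose xk hxk tk htk hbig using H
  have hxtop : Tendsto xk atTop atTop := tendsto_atTop_mono hxk tendsto_natCast_atTop_atTop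
  have hx'top : Tendsto (fun k => xk k + tk k) atTop atTop :=
    tendsto_atTop_mono (fun k => le_add_of_nonneg_right (htk k).1) hxtop
  set g : ℕ → ℝ → ℝ := fun k u => h (xk k + u) - h (xk k) with hgdef
  set g' : ℕ → ℝ → ℝ := fun k u => h (xk k + tk k + u) - h (xk k + tk k) with hg'def
  have hgm : ∀ k, StronglyMeasurable (g k) := fun k =>
    ((hm.comp (measurable_const_add (xk k))).sub measurable_const).stronglyMeasurable
  have hg'm : ∀ k, StronglyMeasurable (g' k) := fun k =>
    ((hm.comp (measurable_const_add (xk k + tk k))).sub measurable_const).stronglyMeasurable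
  have hIcc : volume (Icc (0:ℝ) 2) ≠ ⊤ := by
    rw [Real.volume_Icc]; exact ENNReal.ofReal_ne_top
  have hfg : ∀ᵐ u : ℝ ∂volume, u ∈ Icc (0:ℝ) 2 →
      Tendsto (fun k => g k u) atTop (nhds ((fun _ => (0:ℝ)) u)) :=
    Filter.Eventually.of_forall fun u _ => (hconv u).comp hxtop
  have hfg' : ∀ᵐ u : ℝ ∂volume, u ∈ Icc (0:ℝ) 2 →
      Tendsto (fun k => g' k u) atTop (nhds ((fun _ => (0:ℝ)) u)) :=
    Filter.Eventually.of_forall fun u _ => (hconv u).comp hx'top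
  obtain ⟨T₁, hT₁s, hT₁m, hT₁μ, hu₁⟩ :=
    tendstoUniformlyOn_of_ae_tendsto (g := fun _ => (0:ℝ)) hgm stronglyMeasurable_const
      measurableSet_Icc hIcc hfg (by norm_num : (0:ℝ) < 1/8)
  obtain ⟨T₂, hT₂s, hT₂m, hT₂μ, hu₂⟩ :=
    tendstoUniformlyOn_of_ae_tendsto (g := fun _ => (0:ℝ)) hg'm stronglyMeasurable_const
      measurableSet_Icc hIcc hfg' (by norm_num : (0:ℝ) < 1/8)
  set S : Set ℝ := Icc (0:ℝ) 2 \ (T₁ ∪ T₂) with hSdef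
  have hSm : MeasurableSet S := measurableSet_Icc.diff (hT₁m.union hT₂m)
  have hTμ : volume (T₁ ∪ T₂) ≤ ENNReal.ofReal (1/4) := by
    refine le_trans (measure_union_le _ _) ?_
    refine le_trans (add_le_add hT₁μ hT₂μ) ?_
    rw [← ENNReal.ofReal_add (by norm_num) (by norm_num)]
    norm_num
  have hSμ : ENNReal.ofReal (7/4) ≤ volume S := by
    have h1 : ENNReal.ofReal (7/4) = ENNReal.ofReal 2 - ENNReal.ofReal (1/4) := by
      rw [← ENNReal.ofReal_sub _ (by norm_num)]; norm_num
    rw [h1]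
    refine le_trans (tsub_le_tsub ?_ hTμ) le_measure_diff
    rw [Real.volume_Icc]; norm_num
  obtain ⟨K, hK1, hK2⟩ := ((Metric.tendstoUniformlyOn_iff.1 hu₁ (ε/2) (by positivity)).and
    (Metric.tendstoUniformlyOn_iff.1 hu₂ (ε/2) (by positivity))).exists
  set P : Set ℝ := (fun u => u + tk K) ⁻¹' S with hPdef
  have hPm : MeasurableSet P := hSm.preimage (measurable_add_const _)
  have hPμ : volume P = volume S := measure_preimage_add_right volume (tk K) S
  have hsub : S ∪ P ⊆ Icc (-1 : ℝ) 2 := by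
    rintro u (hu | hu)
    · exact ⟨by linarith [hu.1.1], hu.1.2⟩
    · have h1 : u + tk K ∈ Icc (0:ℝ) 2 := hu.1
      have ht := htk K
      exact ⟨by linarith [h1.1, ht.2], by linarith [h1.2, ht.1]⟩
  have hne : (S ∩ P).Nonempty := by
    by_contra hemp
    rw [Set.not_nonempty_iff_eq_empty] at hemp
    have hdisj : Disjoint S P := Set.disjoint_iff_inter_eq_empty.2 hemp
    have hun : volume (S ∪ P) = volume S + volume P := measure_union hdisj hPm
    have h3 : volume (S ∪ P) ≤ ENNReal.ofReal 3 := by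
      refine le_trans (measure_mono hsub) ?_
      rw [Real.volume_Icc]; norm_num
    rw [hun, hPμ] at h3
    have h4 : ENNReal.ofReal (7/4) + ENNReal.ofReal (7/4) ≤ ENNReal.ofReal 3 :=
      le_trans (add_le_add hSμ hSμ) h3
    rw [← ENNReal.ofReal_add (by norm_num) (by norm_num)] at h4
    have h5 := (ENNReal.ofReal_le_ofReal_iff (by norm_num)).1 h4
    norm_num at h5
  obtain ⟨u, huS, huP⟩ := hne
  have huP' : u + tk K ∈ S := huP
  have e1 : |g K (tk K + u)| < ε/2 := by
    have hmem : tk K + u ∈ Icc (0:ℝ) 2 \ T₁ := by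
      rw [add_comm]
      exact ⟨huP'.1, fun hmm => huP'.2 (Or.inl hmm)⟩
    have := hK1 (tk K + u) hmem
    simpa [Real.dist_eq, abs_sub_comm] using this
  have e2 : |g' K u| < ε/2 := by
    have hmem : u ∈ Icc (0:ℝ) 2 \ T₂ := ⟨huS.1, fun hmm => huS.2 (Or.inr hmm)⟩
    have := hK2 u hmem
    simpa [Real.dist_eq, abs_sub_comm] using this
  have key : h (xk K + tk K) - h (xk K) = g K (tk K + u) - g' K u := by
    simp only [hgdef, hg'def]
    have harg : xk K + (tk K + u) = xk K + tk K + u := by ring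
    rw [harg]; ring
  have hfin : ε < ε := by
    refine lt_of_lt_of_le (hbig K) ?_
    rw [key]
    calc |g K (tk K + u) - g' K u| ≤ |g K (tk K + u)| + |g' K u| := abs_sub _ _
      _ ≤ ε/2 + ε/2 := add_le_add e1.le e2.le
      _ = ε := by ring
  exact lt_irrefl ε hfin

lemma karamata_steps (h : ℝ → ℝ) {ε X : ℝ} (hε : 0 ≤ ε)
    (hX : ∀ x, X ≤ x → ∀ t ∈ Icc (0:ℝ) 1, |h (x + t) - h x| ≤ ε) :
    ∀ x, X ≤ x → ∀ s, 0 ≤ s → |h (x + s) - h x| ≤ ε * (s + 1) := by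
  have main : ∀ n : ℕ, ∀ x, X ≤ x → ∀ s, 0 ≤ s → s ≤ (n:ℝ) → |h (x + s) - h x| ≤ ε * n := by
    intro n
    induction n with
    | zero =>
      intro x hx s hs0 hs1
      have hs : s = 0 := le_antisymm (by exact_mod_cast hs1) hs0
      simp [hs]
    | succ n ih =>
      intro x hx s hs0 hsn
      rcases le_or_gt s 1 with h1 | h1
      · refine (hX x hx s ⟨hs0, h1⟩).trans ?_
        have hn : (0:ℝ) ≤ n := n.cast_nonneg
        push_cast
        nlinarith
      · have hstep := hX (x + (s - 1)) (by linarith) 1 ⟨by norm_num, le_refl 1⟩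
        have hsn' : s - 1 ≤ (n:ℝ) := by push_cast at hsn; linarith
        have hih := ih x hx (s - 1) (by linarith) hsn'
        have harg : x + (s - 1) + 1 = x + s := by ring
        rw [harg] at hstep
        have hdecomp : h (x + s) - h x =
            (h (x + s) - h (x + (s - 1))) + (h (x + (s - 1)) - h x) := by ring
        calc |h (x + s) - h x|
            ≤ |h (x + s) - h (x + (s - 1))| + |h (x + (s - 1)) - h x| := by
              rw [hdecomp]; exact abs_add_le _ _
          _ ≤ ε + ε * n := add_le_add hstep hih
          _ = ε * (n + 1 : ℕ) := by push_cast; ring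
  intro x hx s hs
  have h1 := main ⌈s⌉₊ x hx s hs (Nat.le_ceil s)
  refine h1.trans (mul_le_mul_of_nonneg_left ?_ hε)
  exact (Nat.ceil_lt_add_one hs).le

/-- Karamata's integral theorem (direct half): if `ℓ` is slowly varying at infinity,
positive, measurable and locally bounded on `[A,∞)`, then for every `λ > −1`,
`∫_A^x u^λ ℓ(u) du ∼ x^{λ+1} ℓ(x)/(λ+1)` as `x → ∞`. -/
theorem stmt3 (ℓ : ℝ → ℝ) (A : ℝ) (hA : 0 < A)
    (hpos : ∀ x, A ≤ x → 0 < ℓ x)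
    (hmeas : Measurable ℓ)
    (hloc : ∀ B, A ≤ B → ∃ C, ∀ x ∈ Icc A B, |ℓ x| ≤ C)
    (hSV : ∀ l > (0:ℝ), Tendsto (fun x => ℓ (l * x) / ℓ x) atTop (nhds 1))
    (lam : ℝ) (hlam : -1 < lam) :
    Tendsto (fun x => (∫ u in A..x, u ^ lam * ℓ u) / (x ^ (lam + 1) * ℓ x / (lam + 1)))
      atTop (nhds 1) := by
  have hl1 : (0:ℝ) < lam + 1 := by linarith
  set h : ℝ → ℝ := fun x => Real.log (ℓ (Real.exp x)) with hhdef
  have hhm : Measurable h := Real.measurable_log.comp (hmeas.comp Real.measurable_exp)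
  -- convergence of h-increments
  have hconv : ∀ u : ℝ, Tendsto (fun x => h (x + u) - h x) atTop (nhds 0) := by
    intro u
    have h1 : Tendsto (fun x : ℝ => ℓ (Real.exp u * Real.exp x) / ℓ (Real.exp x)) atTop
        (nhds 1) := (hSV _ (Real.exp_pos u)).comp Real.tendsto_exp_atTop
    have h2 : Tendsto (fun x : ℝ => Real.log (ℓ (Real.exp u * Real.exp x) / ℓ (Real.exp x)))
        atTop (nhds 0) := by
      have := (Real.continuousAt_log (by norm_num : (1:ℝ) ≠ 0)).tendsto.comp h1
      simpa [Function.comp_def] using this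
    refine h2.congr' ?_
    filter_upwards [eventually_ge_atTop (Real.log A), eventually_ge_atTop (Real.log A - u)]
      with x hx1 hx2
    have hex : A ≤ Real.exp x := by
      calc A = Real.exp (Real.log A) := (Real.exp_log hA).symm
        _ ≤ Real.exp x := Real.exp_le_exp.2 hx1
    have hex2 : A ≤ Real.exp (x + u) := by
      calc A = Real.exp (Real.log A) := (Real.exp_log hA).symm
        _ ≤ Real.exp (x + u) := Real.exp_le_exp.2 (by linarith)
    have hmul : Real.exp u * Real.exp x = Real.exp (x + u) := by
      rw [← Real.exp_add]; ring_nf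
    rw [hmul, Real.log_div (ne_of_gt (hpos _ hex2)) (ne_of_gt (hpos _ hex))]
  -- Potter bounds
  have potter : ∀ ε : ℝ, 0 < ε → ∃ X : ℝ, A ≤ X ∧ 0 < X ∧ ∀ x y : ℝ, X ≤ x → x ≤ y →
      ℓ y ≤ Real.exp ε * (y / x) ^ ε * ℓ x ∧ ℓ x ≤ Real.exp ε * (y / x) ^ ε * ℓ y := by
    intro ε hε
    obtain ⟨X₀, hX₀⟩ := karamata_uct h hhm hconv ε hε
    have hsteps := karamata_steps h hε.le hX₀
    refine ⟨max A (Real.exp X₀), le_max_left _ _, lt_of_lt_of_le hA (le_max_left _ _), ?_⟩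
    intro x y hx hxy
    have hx0 : 0 < x := lt_of_lt_of_le (lt_of_lt_of_le hA (le_max_left _ _)) hx
    have hy0 : 0 < y := lt_of_lt_of_le hx0 hxy
    have hxA : A ≤ x := le_trans (le_max_left _ _) hx
    have hyA : A ≤ y := hxA.trans hxy
    have hlx : X₀ ≤ Real.log x := by
      rw [← Real.log_exp X₀]
      exact Real.log_le_log (Real.exp_pos _) (le_trans (le_max_right _ _) hx)
    have hs : 0 ≤ Real.log y - Real.log x := sub_nonneg.2 (Real.log_le_log hx0 hxy)
    have hb := hsteps (Real.log x) hlx (Real.log y - Real.log x) hs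
    have harg : Real.log x + (Real.log y - Real.log x) = Real.log y := by ring
    rw [harg] at hb
    have hhy : h (Real.log y) = Real.log (ℓ y) := by
      simp only [hhdef, Real.exp_log hy0]
    have hhx : h (Real.log x) = Real.log (ℓ x) := by
      simp only [hhdef, Real.exp_log hx0]
    rw [hhy, hhx] at hb
    have habs := abs_le.1 hb
    have hrpow : (y / x) ^ ε = Real.exp ((Real.log y - Real.log x) * ε) := by
      rw [Real.rpow_def_of_pos (div_pos hy0 hx0),
        Real.log_div (ne_of_gt hy0) (ne_of_gt hx0)]
    constructor
    · have h1 : Real.log (ℓ y) ≤ Real.log (ℓ x) + ε * (Real.log y - Real.log x + 1) := by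
        linarith [habs.2]
      calc ℓ y = Real.exp (Real.log (ℓ y)) := (Real.exp_log (hpos y hyA)).symm
        _ ≤ Real.exp (Real.log (ℓ x) + ε * (Real.log y - Real.log x + 1)) :=
            Real.exp_le_exp.2 h1
        _ = Real.exp ε * (y / x) ^ ε * ℓ x := by
            rw [hrpow, show Real.log (ℓ x) + ε * (Real.log y - Real.log x + 1)
              = ε + ((Real.log y - Real.log x) * ε + Real.log (ℓ x)) from by ring,
              Real.exp_add, Real.exp_add, Real.exp_log (hpos x hxA)]
            ring
    · have h1 : Real.log (ℓ x) ≤ Real.log (ℓ y) + ε * (Real.log y - Real.log x + 1) := by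
        linarith [habs.1]
      calc ℓ x = Real.exp (Real.log (ℓ x)) := (Real.exp_log (hpos x hxA)).symm
        _ ≤ Real.exp (Real.log (ℓ y) + ε * (Real.log y - Real.log x + 1)) :=
            Real.exp_le_exp.2 h1
        _ = Real.exp ε * (y / x) ^ ε * ℓ y := by
            rw [hrpow, show Real.log (ℓ y) + ε * (Real.log y - Real.log x + 1)
              = ε + ((Real.log y - Real.log x) * ε + Real.log (ℓ y)) from by ring,
              Real.exp_add, Real.exp_add, Real.exp_log (hpos y hyA)]
            ring
  -- integrability
  have hint : ∀ a b : ℝ, A ≤ a → a ≤ b →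
      IntervalIntegrable (fun u => u ^ lam * ℓ u) volume a b := by
    intro a b hAa hab
    obtain ⟨C, hC⟩ := hloc b (hAa.trans hab)
    have ha0 : 0 < a := lt_of_lt_of_le hA hAa
    rw [intervalIntegrable_iff]
    refine Measure.integrableOn_of_bounded ?_
      ((((by fun_prop : Measurable (fun u : ℝ => u ^ lam)).mul hmeas)).aestronglyMeasurable)
      (M := max (a ^ lam) (b ^ lam) * max C 0) ?_
    · rw [Set.uIoc_of_le hab, Real.volume_Ioc]; exact ENNReal.ofReal_ne_top
    · rw [Set.uIoc_of_le hab]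
      filter_upwards [ae_restrict_mem measurableSet_Ioc] with u hu
      have hu0 : 0 < u := lt_trans ha0 hu.1
      have hub : |ℓ u| ≤ max C 0 :=
        le_trans (hC u ⟨hAa.trans hu.1.le, hu.2⟩) (le_max_left _ _)
      have hua : u ^ lam ≤ max (a ^ lam) (b ^ lam) := by
        rcases le_or_gt 0 lam with hl | hl
        · exact le_trans (Real.rpow_le_rpow hu0.le hu.2 hl) (le_max_right _ _)
        · exact le_trans (Real.rpow_le_rpow_of_nonpos ha0 hu.1.le hl.le) (le_max_left _ _)
      rw [norm_mul, Real.norm_eq_abs, Real.norm_eq_abs,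
        abs_of_pos (Real.rpow_pos_of_pos hu0 lam)]
      exact mul_le_mul hua hub (abs_nonneg _)
        (le_trans (Real.rpow_pos_of_pos ha0 lam).le (le_max_left _ _))
  -- x^(lam+1) * ℓ x → ∞
  have htop : Tendsto (fun x => x ^ (lam + 1) * ℓ x) atTop atTop := by
    set e1 : ℝ := (lam + 1)/2 with he1
    have he10 : (0:ℝ) < e1 := by rw [he1]; positivity
    obtain ⟨X, hXA, hX0, hP⟩ := potter e1 he10
    have hlX : 0 < ℓ X := hpos X hXA
    have hc : 0 < Real.exp (-e1) * X ^ e1 * ℓ X := by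
      have h1 := Real.exp_pos (-e1)
      have h2 := Real.rpow_pos_of_pos hX0 e1
      positivity
    refine tendsto_atTop_mono' atTop ?_ ((tendsto_rpow_atTop he10).const_mul_atTop hc)
    filter_upwards [eventually_ge_atTop X, eventually_gt_atTop (0:ℝ)] with x hx hx0
    have h2 := (hP X x le_rfl hx).2
    have hlx : 0 < ℓ x := hpos x (hXA.trans hx)
    have hb : (0:ℝ) < X ^ e1 := Real.rpow_pos_of_pos hX0 _
    have hbx : (0:ℝ) < x ^ e1 := Real.rpow_pos_of_pos hx0 _
    have hE : (0:ℝ) < Real.exp e1 := Real.exp_pos _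
    have key : X ^ e1 * ℓ X ≤ Real.exp e1 * (x ^ e1 * ℓ x) := by
      rw [Real.div_rpow hx0.le hX0.le] at h2
      calc X ^ e1 * ℓ X ≤ X ^ e1 * (Real.exp e1 * (x ^ e1 / X ^ e1) * ℓ x) :=
            mul_le_mul_of_nonneg_left h2 hb.le
        _ = Real.exp e1 * (x ^ e1 * ℓ x) := by field_simp
    show Real.exp (-e1) * X ^ e1 * ℓ X * x ^ e1 ≤ x ^ (lam + 1) * ℓ x
    have hsplit : x ^ (lam + 1) = x ^ e1 * x ^ e1 := by
      rw [← Real.rpow_add hx0]; congr 1; rw [he1]; ring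
    rw [hsplit, Real.exp_neg]
    calc (Real.exp e1)⁻¹ * X ^ e1 * ℓ X * x ^ e1
        = (Real.exp e1)⁻¹ * x ^ e1 * (X ^ e1 * ℓ X) := by ring
      _ ≤ (Real.exp e1)⁻¹ * x ^ e1 * (Real.exp e1 * (x ^ e1 * ℓ x)) := by
          refine mul_le_mul_of_nonneg_left key ?_
          positivity
      _ = x ^ e1 * x ^ e1 * ℓ x := by field_simp
  have hDtop : Tendsto (fun x => x ^ (lam + 1) * ℓ x / (lam + 1)) atTop atTop :=
    htop.atTop_div_const hl1
  -- main quantitative bounds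
  have main : ∀ ε : ℝ, 0 < ε → ε < lam + 1 →
      ∀ᶠ x in atTop,
        (∫ u in A..x, u ^ lam * ℓ u) / (x ^ (lam + 1) * ℓ x / (lam + 1)) ≤
            Real.exp ε * (lam + 1) / (lam + 1 - ε) + ε ∧
        Real.exp (-ε) * (lam + 1) / (lam + 1 + ε) * (1 - ε) ≤
            (∫ u in A..x, u ^ lam * ℓ u) / (x ^ (lam + 1) * ℓ x / (lam + 1)) := by
    intro ε hε hεl
    obtain ⟨X, hXA, hX0, hP⟩ := potter ε hε
    have hp0 : (0:ℝ) < lam + 1 - ε := by linarith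
    have hq0 : (0:ℝ) < lam + 1 + ε := by linarith
    set I₀ : ℝ := ∫ u in A..X, u ^ lam * ℓ u with hI₀def
    have hI₀int := hint A X le_rfl hXA
    have hI₀nn : 0 ≤ I₀ := by
      rw [hI₀def]
      refine intervalIntegral.integral_nonneg hXA (fun u hu => ?_)
      exact mul_nonneg (Real.rpow_nonneg (le_trans hA.le hu.1) lam) (hpos u hu.1).le
    have htail : Tendsto (fun x => I₀ / (x ^ (lam + 1) * ℓ x / (lam + 1))) atTop (nhds 0) :=
      tendsto_const_nhds.div_atTop hDtop
    have htail2 : Tendsto (fun x => (X / x) ^ (lam + 1 + ε)) atTop (nhds 0) := by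
      have h1 : Tendsto (fun x : ℝ => X / x) atTop (nhds 0) :=
        tendsto_const_nhds.div_atTop tendsto_id
      have h2 : ContinuousAt (fun y : ℝ => y ^ (lam + 1 + ε)) 0 :=
        Real.continuousAt_rpow_const 0 _ (Or.inr hq0.le)
      have := h2.tendsto.comp h1
      simpa [Function.comp_def, Real.zero_rpow hq0.ne'] using this
    filter_upwards [eventually_ge_atTop X, eventually_gt_atTop (0:ℝ),
      htail.eventually_lt_const hε, htail2.eventually_lt_const hε] with x hxX hx0 ht1 ht2
    have hxA : A ≤ x := hXA.trans hxX
    have hlx : 0 < ℓ x := hpos x hxA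
    have hxp : (0:ℝ) < x ^ (lam + 1) := Real.rpow_pos_of_pos hx0 _
    have hD : (0:ℝ) < x ^ (lam + 1) * ℓ x / (lam + 1) := by positivity
    have hsplit : (∫ u in A..x, u ^ lam * ℓ u) = I₀ + ∫ u in X..x, u ^ lam * ℓ u :=
      (integral_add_adjacent_intervals hI₀int (hint X x hXA hxX)).symm
    have hXint := hint X x hXA hxX
    -- upper bound for the integral over [X, x]
    have hpe : lam - ε + 1 = lam + 1 - ε := by ring
    have hup : (∫ u in X..x, u ^ lam * ℓ u) ≤
        Real.exp ε * ℓ x * x ^ ε *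
          ((x ^ (lam + 1 - ε) - X ^ (lam + 1 - ε)) / (lam + 1 - ε)) := by
      have hmono : ∀ u ∈ Icc X x, u ^ lam * ℓ u ≤
          Real.exp ε * ℓ x * x ^ ε * u ^ (lam - ε) := by
        intro u hu
        have hu0 : 0 < u := lt_of_lt_of_le hX0 hu.1
        have h2 := (hP u x hu.1 hu.2).2
        calc u ^ lam * ℓ u ≤ u ^ lam * (Real.exp ε * (x / u) ^ ε * ℓ x) :=
              mul_le_mul_of_nonneg_left h2 (Real.rpow_nonneg hu0.le _)
          _ = Real.exp ε * ℓ x * x ^ ε * u ^ (lam - ε) := by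
              rw [Real.div_rpow hx0.le hu0.le, Real.rpow_sub hu0]
              have hue : (0:ℝ) < u ^ ε := Real.rpow_pos_of_pos hu0 _
              field_simp
      have hgint : IntervalIntegrable
          (fun u => Real.exp ε * ℓ x * x ^ ε * u ^ (lam - ε)) volume X x :=
        (intervalIntegrable_rpow' (by linarith : (-1:ℝ) < lam - ε)).const_mul _
      calc (∫ u in X..x, u ^ lam * ℓ u)
          ≤ ∫ u in X..x, Real.exp ε * ℓ x * x ^ ε * u ^ (lam - ε) :=
            intervalIntegral.integral_mono_on hxX hXint hgint hmono
        _ = Real.exp ε * ℓ x * x ^ ε * ∫ u in X..x, u ^ (lam - ε) := by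
            rw [intervalIntegral.integral_const_mul]
        _ = Real.exp ε * ℓ x * x ^ ε *
            ((x ^ (lam + 1 - ε) - X ^ (lam + 1 - ε)) / (lam + 1 - ε)) := by
            rw [integral_rpow (Or.inl (by linarith : (-1:ℝ) < lam - ε)), hpe]
    -- lower bound for the integral over [X, x]
    have hqe : lam + ε + 1 = lam + 1 + ε := by ring
    have hlow : Real.exp (-ε) * ℓ x * x ^ (-ε) *
        ((x ^ (lam + 1 + ε) - X ^ (lam + 1 + ε)) / (lam + 1 + ε)) ≤
        ∫ u in X..x, u ^ lam * ℓ u := by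
      have hmono : ∀ u ∈ Icc X x,
          Real.exp (-ε) * ℓ x * x ^ (-ε) * u ^ (lam + ε) ≤ u ^ lam * ℓ u := by
        intro u hu
        have hu0 : 0 < u := lt_of_lt_of_le hX0 hu.1
        have h2 := (hP u x hu.1 hu.2).1
        have hue : (0:ℝ) < u ^ ε := Real.rpow_pos_of_pos hu0 _
        have hxe : (0:ℝ) < x ^ ε := Real.rpow_pos_of_pos hx0 _
        have key : Real.exp (-ε) * x ^ (-ε) * u ^ ε * ℓ x ≤ ℓ u := by
          have hnn : (0:ℝ) ≤ Real.exp (-ε) * x ^ (-ε) * u ^ ε := by positivity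
          calc Real.exp (-ε) * x ^ (-ε) * u ^ ε * ℓ x
              ≤ Real.exp (-ε) * x ^ (-ε) * u ^ ε * (Real.exp ε * (x / u) ^ ε * ℓ u) := by
                exact mul_le_mul_of_nonneg_left h2 hnn
            _ = ℓ u := by
                rw [Real.div_rpow hx0.le hu0.le, Real.exp_neg, Real.rpow_neg hx0.le]
                field_simp
        calc Real.exp (-ε) * ℓ x * x ^ (-ε) * u ^ (lam + ε)
            = u ^ lam * (Real.exp (-ε) * x ^ (-ε) * u ^ ε * ℓ x) := by
              rw [Real.rpow_add hu0]; ring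
          _ ≤ u ^ lam * ℓ u :=
              mul_le_mul_of_nonneg_left key (Real.rpow_nonneg hu0.le _)
      have hgint : IntervalIntegrable
          (fun u => Real.exp (-ε) * ℓ x * x ^ (-ε) * u ^ (lam + ε)) volume X x :=
        (intervalIntegrable_rpow' (by linarith : (-1:ℝ) < lam + ε)).const_mul _
      calc Real.exp (-ε) * ℓ x * x ^ (-ε) *
          ((x ^ (lam + 1 + ε) - X ^ (lam + 1 + ε)) / (lam + 1 + ε))
          = ∫ u in X..x, Real.exp (-ε) * ℓ x * x ^ (-ε) * u ^ (lam + ε) := by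
            rw [intervalIntegral.integral_const_mul,
              integral_rpow (Or.inl (by linarith : (-1:ℝ) < lam + ε)), hqe]
        _ ≤ ∫ u in X..x, u ^ lam * ℓ u :=
            intervalIntegral.integral_mono_on hxX hgint hXint hmono
    constructor
    · -- upper
      have hb1 : (x ^ (lam + 1 - ε) - X ^ (lam + 1 - ε)) / (lam + 1 - ε) ≤
          x ^ (lam + 1 - ε) / (lam + 1 - ε) :=
        (div_le_div_iff_of_pos_right hp0).2 (sub_le_self _ (Real.rpow_nonneg hX0.le _))
      have hxe2 : Real.exp ε * ℓ x * x ^ ε * (x ^ (lam + 1 - ε) / (lam + 1 - ε)) =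
          Real.exp ε * ℓ x * x ^ (lam + 1) / (lam + 1 - ε) := by
        rw [show lam + 1 = ε + (lam + 1 - ε) from by ring, Real.rpow_add hx0]
        ring
      have h2 : (∫ u in X..x, u ^ lam * ℓ u) / (x ^ (lam + 1) * ℓ x / (lam + 1)) ≤
          Real.exp ε * (lam + 1) / (lam + 1 - ε) := by
        rw [div_le_iff₀ hD]
        calc (∫ u in X..x, u ^ lam * ℓ u)
            ≤ Real.exp ε * ℓ x * x ^ ε *
                ((x ^ (lam + 1 - ε) - X ^ (lam + 1 - ε)) / (lam + 1 - ε)) := hup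
          _ ≤ Real.exp ε * ℓ x * x ^ (lam + 1) / (lam + 1 - ε) :=
              (mul_le_mul_of_nonneg_left hb1 (by positivity)).trans_eq hxe2
          _ = Real.exp ε * (lam + 1) / (lam + 1 - ε) * (x ^ (lam + 1) * ℓ x / (lam + 1)) := by
              field_simp
      rw [hsplit, add_div]
      have h1 : I₀ / (x ^ (lam + 1) * ℓ x / (lam + 1)) < ε := ht1
      linarith
    · -- lower
      have hIl : Real.exp (-ε) * (lam + 1) / (lam + 1 + ε) * (1 - (X / x) ^ (lam + 1 + ε)) *
          (x ^ (lam + 1) * ℓ x / (lam + 1)) =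
          Real.exp (-ε) * ℓ x * x ^ (-ε) *
            ((x ^ (lam + 1 + ε) - X ^ (lam + 1 + ε)) / (lam + 1 + ε)) := by
        rw [Real.div_rpow hX0.le hx0.le,
          show x ^ (lam + 1) = x ^ (lam + 1 + ε) * x ^ (-ε) from by
            rw [← Real.rpow_add hx0]; congr 1; ring]
        have hxq : (0:ℝ) < x ^ (lam + 1 + ε) := Real.rpow_pos_of_pos hx0 _
        field_simp
      have h3 : Real.exp (-ε) * (lam + 1) / (lam + 1 + ε) * (1 - (X / x) ^ (lam + 1 + ε)) ≤
          (∫ u in A..x, u ^ lam * ℓ u) / (x ^ (lam + 1) * ℓ x / (lam + 1)) := by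
        rw [le_div_iff₀ hD, hIl, hsplit]
        refine le_trans hlow ?_
        exact le_add_of_nonneg_left hI₀nn
      refine le_trans ?_ h3
      refine mul_le_mul_of_nonneg_left ?_ (by positivity)
      linarith
  -- final assembly
  rw [Metric.tendsto_nhds]
  intro η hη
  have hφ : Tendsto (fun ε : ℝ => Real.exp ε * (lam + 1) / (lam + 1 - ε) + ε)
      (nhds 0) (nhds 1) := by
    have hc : ContinuousAt (fun ε : ℝ => Real.exp ε * (lam + 1) / (lam + 1 - ε) + ε) 0 := by
      refine ContinuousAt.add (ContinuousAt.div ?_ ?_ ?_) continuousAt_id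
      · exact Real.continuous_exp.continuousAt.mul continuousAt_const
      · exact continuousAt_const.sub continuousAt_id
      · simpa using hl1.ne'
    have h0 : Real.exp 0 * (lam + 1) / (lam + 1 - 0) + 0 = 1 := by
      rw [Real.exp_zero]; field_simp; simp [hl1.ne']
    have := hc.tendsto
    beta_reduce at this
    rwa [h0] at this
  have hψ : Tendsto (fun ε : ℝ => Real.exp (-ε) * (lam + 1) / (lam + 1 + ε) * (1 - ε))
      (nhds 0) (nhds 1) := by
    have hc : ContinuousAt
        (fun ε : ℝ => Real.exp (-ε) * (lam + 1) / (lam + 1 + ε) * (1 - ε)) 0 := by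
      refine ContinuousAt.mul (ContinuousAt.div ?_ ?_ ?_) (continuousAt_const.sub continuousAt_id)
      · exact ((Real.continuous_exp.comp continuous_neg).continuousAt).mul continuousAt_const
      · exact continuousAt_const.add continuousAt_id
      · simpa using hl1.ne'
    have h0 : Real.exp (-0) * (lam + 1) / (lam + 1 + 0) * (1 - 0) = 1 := by
      rw [neg_zero, Real.exp_zero]; field_simp; simp
    have := hc.tendsto
    beta_reduce at this
    rwa [h0] at this
  have hev : ∀ᶠ ε in nhds (0:ℝ),
      (Real.exp ε * (lam + 1) / (lam + 1 - ε) + ε < 1 + η ∧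
        1 - η < Real.exp (-ε) * (lam + 1) / (lam + 1 + ε) * (1 - ε)) ∧ ε < lam + 1 :=
    ((hφ.eventually_lt_const (by linarith)).and (hψ.eventually_const_lt (by linarith))).and
      (eventually_lt_nhds hl1)
  obtain ⟨ε, ⟨⟨hub, hlb⟩, hεl⟩, hε0⟩ :=
    ((hev.filter_mono (nhdsWithin_le_nhds (s := Set.Ioi (0:ℝ)))).and
      eventually_mem_nhdsWithin).exists
  filter_upwards [main ε hε0 hεl] with x hx
  rw [Real.dist_eq, abs_sub_lt_iff]
  exact ⟨by linarith [hx.1], by linarith [hx.2]⟩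
end

section
/- Under the critical assumption f(s) = (1-s)^{1+ν} L(1/(1-s)), the ratio R(t;s)/R(t;0) → 1 as t → ∞ for every fixed s ∈ [0,1), where R(t;s) = 1 − F(t;s) and F(t;s) is defined by ∫_s^{F(t;s)} dx/f(x) = t. -/
set_option maxHeartbeats 1000000


open Filter Set intervalIntegral

open MeasureTheory

/-- Under `f(s) = (1-s)^{1+ν} L(1/(1-s))`, the ratio `R(t;s)/R(t;0) → 1` as `t → ∞` for
every fixed `s ∈ [0,1)`, where `R(t;s) = 1 − F(t;s)` and `F` is defined by
`∫_s^{F(t;s)} dx/f(x) = t`, increasing to `1`. -/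
theorem stmt5 (L f : ℝ → ℝ) (F : ℝ → ℝ → ℝ) (ν : ℝ)
    (hν : 0 < ν) (hν1 : ν ≤ 1)
    (hLpos : ∀ x, 1 ≤ x → 0 < L x)
    (hSV : ∀ l > (0:ℝ), Tendsto (fun x => L (l * x) / L x) atTop (nhds 1))
    (hloc : ∀ B, 1 ≤ B → ∃ C, ∀ x ∈ Icc (1:ℝ) B, |L x| ≤ C)
    (hf : ∀ x : ℝ, 0 ≤ x → x < 1 → f x = (1 - x) ^ (1 + ν) * L (1 / (1 - x)))
    (hFint : ∀ s : ℝ, 0 ≤ s → s < 1 → ∀ t : ℝ, 0 ≤ t → (∫ x in s..F t s, 1 / f x) = t)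
    (hrange : ∀ s : ℝ, 0 ≤ s → s < 1 → ∀ t : ℝ, 0 ≤ t → s ≤ F t s ∧ F t s < 1)
    (hmono : ∀ s : ℝ, 0 ≤ s → s < 1 → MonotoneOn (fun t => F t s) (Ici 0))
    (hlim : ∀ s : ℝ, 0 ≤ s → s < 1 → Tendsto (fun t => F t s) atTop (nhds 1)) :
    ∀ s : ℝ, 0 ≤ s → s < 1 →
      Tendsto (fun t => (1 - F t s) / (1 - F t 0)) atTop (nhds 1) := by
  intro s hs0 hs1
  -- positivity of f on [0,1)
  have hfpos : ∀ x : ℝ, 0 ≤ x → x < 1 → 0 < f x := by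
    intro x hx hx1
    have h1x : 0 < 1 - x := by linarith
    have hux : (1:ℝ) ≤ 1 / (1 - x) := by
      rw [le_div_iff₀ h1x]; linarith
    rw [hf x hx hx1]
    exact mul_pos (Real.rpow_pos_of_pos h1x _) (hLpos _ hux)
  have hgpos : ∀ x : ℝ, 0 ≤ x → x < 1 → 0 < 1 / f x := fun x hx hx1 =>
    one_div_pos.mpr (hfpos x hx hx1)
  have hsub : ∀ p q p' q' : ℝ, p ≤ p' → p' ≤ q' → q' ≤ q → uIcc p' q' ⊆ uIcc p q := by
    intro p q p' q' h1 h2 h3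
    rw [uIcc_of_le h2, uIcc_of_le (h1.trans (h2.trans h3))]
    exact Icc_subset_Icc h1 h3
  rcases eq_or_lt_of_le hs0 with hs | hs
  · -- trivial case s = 0
    subst hs
    have hev : ∀ᶠ t : ℝ in atTop, (1:ℝ) = (1 - F t 0) / (1 - F t 0) := by
      filter_upwards [eventually_ge_atTop (0:ℝ)] with t ht
      have h1 := (hrange 0 le_rfl one_pos t ht).2
      rw [div_self (by linarith)]
    exact Tendsto.congr' hev tendsto_const_nhds
  -- main case 0 < s
  rw [Metric.tendsto_nhds]
  intro ε hε
  set lam : ℝ := 1 + ε with hlamdef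
  have hlam1 : 1 < lam := by rw [hlamdef]; linarith
  have hlam0 : 0 < lam := by linarith
  have hlamne : lam ≠ 0 := ne_of_gt hlam0
  have hlamν : 1 < lam ^ ν := by
    rw [Real.one_lt_rpow_iff_of_pos hlam0]
    exact Or.inl ⟨hlam1, hν⟩
  have hPpos : 0 < lam ^ ν := Real.rpow_pos_of_pos hlam0 ν
  clear_value lam
  set θ : ℝ := (1 + lam ^ ν) / 2 with hθdef
  have hθ1 : 1 < θ := by rw [hθdef]; linarith
  have hθP : θ < lam ^ ν := by rw [hθdef]; linarith
  have hθpos : 0 < θ := by linarith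
  clear_value θ
  -- slow variation threshold
  have hK1 : (1:ℝ) < lam ^ ν / θ := (one_lt_div hθpos).mpr hθP
  have hevL : ∀ᶠ u in atTop, L (lam * u) / L u < lam ^ ν / θ :=
    (hSV lam hlam0).eventually (eventually_lt_nhds hK1)
  obtain ⟨u₀, hu₀⟩ := eventually_atTop.1 hevL
  set u₁ : ℝ := max u₀ 1 with hu₁def
  have hu₁1 : (1:ℝ) ≤ u₁ := le_max_right _ _
  have hu₁pos : 0 < u₁ := by linarith
  have hu₁0 : u₀ ≤ u₁ := le_max_left _ _
  clear_value u₁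
  have hLb : ∀ u : ℝ, u₁ ≤ u → θ * L (lam * u) ≤ lam ^ ν * L u := by
    intro u hu
    have hLu : 0 < L u := hLpos u (hu₁1.trans hu)
    have h := hu₀ u (hu₁0.trans hu)
    rw [div_lt_div_iff₀ hLu hθpos] at h
    linarith
  set x₁ : ℝ := 1 - 1 / u₁ with hx₁def
  have hx₁0 : 0 ≤ x₁ := by
    have h : 1 / u₁ ≤ 1 := by rw [div_le_one hu₁pos]; exact hu₁1
    rw [hx₁def]; linarith
  have hx₁1 : x₁ < 1 := by
    have h : 0 < 1 / u₁ := by positivity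
    rw [hx₁def]; linarith
  clear_value x₁
  set c : ℝ := ∫ x in (0:ℝ)..s, 1 / f x with hcdef
  set C₁ : ℝ := ∫ x in (0:ℝ)..x₁, 1 / f x with hC₁def
  clear_value c C₁
  have hlim0 := hlim 0 le_rfl one_pos
  have ev2 : ∀ᶠ t : ℝ in atTop, s < F t 0 := hlim0.eventually (eventually_gt_nhds hs1)
  have ev3 : ∀ᶠ t : ℝ in atTop, x₁ < F t 0 := hlim0.eventually (eventually_gt_nhds hx₁1)
  have ev4 : ∀ᶠ t : ℝ in atTop, c + θ * C₁ + 1 < (θ - 1) * t := by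
    have h : Tendsto (fun t : ℝ => (θ - 1) * t) atTop atTop :=
      Tendsto.const_mul_atTop (by linarith) tendsto_id
    exact h.eventually_gt_atTop _
  filter_upwards [eventually_ge_atTop (1:ℝ), ev2, ev3, ev4] with t ht1 hts htx hbig
  have ht0 : (0:ℝ) ≤ t := by linarith
  set a : ℝ := F t 0 with hadef
  set b : ℝ := F t s with hbdef
  have ha0 : 0 ≤ a := (hrange 0 le_rfl one_pos t ht0).1
  have ha1 : a < 1 := (hrange 0 le_rfl one_pos t ht0).2
  have hb0 : 0 ≤ b := hs0.trans (hrange s hs0 hs1 t ht0).1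
  have hb1 : b < 1 := (hrange s hs0 hs1 t ht0).2
  have hGa : (∫ x in (0:ℝ)..a, 1 / f x) = t := hFint 0 le_rfl one_pos t ht0
  have hGsb : (∫ x in s..b, 1 / f x) = t := hFint s hs0 hs1 t ht0
  clear_value a b
  have hInt0a : IntervalIntegrable (fun x => 1 / f x) volume 0 a := by
    by_contra h
    rw [intervalIntegral.integral_undef h] at hGa
    linarith
  have hIntsb : IntervalIntegrable (fun x => 1 / f x) volume s b := by
    by_contra h
    rw [intervalIntegral.integral_undef h] at hGsb
    linarith
  have hInt0s : IntervalIntegrable (fun x => 1 / f x) volume 0 s :=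
    hInt0a.mono_set (hsub 0 a 0 s le_rfl hs0 hts.le)
  have hInt0b : IntervalIntegrable (fun x => 1 / f x) volume 0 b := hInt0s.trans hIntsb
  have hGb : (∫ x in (0:ℝ)..b, 1 / f x) = c + t := by
    rw [← integral_add_adjacent_intervals hInt0s hIntsb, hGsb, hcdef]
  have hcpos : 0 < c := by
    rw [hcdef]
    exact intervalIntegral_pos_of_pos_on hInt0s
      (fun x hx => hgpos x hx.1.le (hx.2.trans hs1)) hs
  have hab : a ≤ b := by
    by_contra h
    push_neg at h
    have hIntba : IntervalIntegrable (fun x => 1 / f x) volume b a :=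
      hInt0a.mono_set (hsub 0 a b a hb0 h.le le_rfl)
    have hadd := integral_add_adjacent_intervals hInt0b hIntba
    rw [hGb, hGa] at hadd
    have hnn : 0 ≤ ∫ x in b..a, 1 / f x :=
      intervalIntegral.integral_nonneg h.le
        (fun u hu => (hgpos u (hb0.trans hu.1) (lt_of_le_of_lt hu.2 ha1)).le)
    linarith
  have h1a : 0 < 1 - a := by linarith
  have h1b : 0 < 1 - b := by linarith
  -- key claim : the relative decrement is bounded
  have hkey : (1 - a) / lam ≤ 1 - b := by
    by_contra hbad
    push_neg at hbad
    set b' : ℝ := 1 - (1 - a) / lam with hb'def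
    clear_value b'
    have hb'b : b' < b := by rw [hb'def]; linarith
    have hquot : (1 - a) / lam ≤ 1 - a := div_le_self (by linarith) hlam1.le
    have hab' : a ≤ b' := by rw [hb'def]; linarith
    have hb'0 : 0 ≤ b' := ha0.trans hab'
    have hb'1 : b' < 1 := by
      have h : 0 < (1 - a) / lam := div_pos h1a hlam0
      rw [hb'def]; linarith
    set Tx₁ : ℝ := 1 - (1 - x₁) / lam with hTdef
    clear_value Tx₁
    have hx₁a : x₁ ≤ a := htx.le
    have hTb' : Tx₁ ≤ b' := by
      have h : (1 - a) / lam ≤ (1 - x₁) / lam := by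
        gcongr <;> linarith
      rw [hTdef, hb'def]; linarith
    have hT0 : 0 ≤ Tx₁ := by
      have h1 : (1 - x₁) / lam ≤ 1 := by
        rw [div_le_one hlam0]; linarith
      rw [hTdef]; linarith
    have hT1 : Tx₁ < 1 := by
      have h : 0 < (1 - x₁) / lam := div_pos (by linarith) hlam0
      rw [hTdef]; linarith
    -- integrability pieces
    have hIntab : IntervalIntegrable (fun x => 1 / f x) volume a b :=
      hInt0b.mono_set (hsub 0 b a b ha0 hab le_rfl)
    have hIntab' : IntervalIntegrable (fun x => 1 / f x) volume a b' :=
      hIntab.mono_set (hsub a b a b' le_rfl hab' hb'b.le)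
    have hIntb'b : IntervalIntegrable (fun x => 1 / f x) volume b' b :=
      hIntab.mono_set (hsub a b b' b hab' hb'b.le le_rfl)
    have hInt0b' : IntervalIntegrable (fun x => 1 / f x) volume 0 b' :=
      hInt0b.mono_set (hsub 0 b 0 b' le_rfl hb'0 hb'b.le)
    have hInt0T : IntervalIntegrable (fun x => 1 / f x) volume 0 Tx₁ :=
      hInt0b'.mono_set (hsub 0 b' 0 Tx₁ le_rfl hT0 hTb')
    have hIntTb' : IntervalIntegrable (fun x => 1 / f x) volume Tx₁ b' :=
      hInt0b'.mono_set (hsub 0 b' Tx₁ b' hT0 hTb' le_rfl)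
    have hInt0x₁ : IntervalIntegrable (fun x => 1 / f x) volume 0 x₁ :=
      hInt0a.mono_set (hsub 0 a 0 x₁ le_rfl hx₁0 hx₁a)
    have hIntx₁a : IntervalIntegrable (fun x => 1 / f x) volume x₁ a :=
      hInt0a.mono_set (hsub 0 a x₁ a hx₁0 hx₁a le_rfl)
    -- value equations
    have eq1 : (∫ x in a..b, 1 / f x) = c := by
      have h := integral_add_adjacent_intervals hInt0a hIntab
      rw [hGa, hGb] at h; linarith
    have eq2 : (∫ x in a..b', 1 / f x) ≤ c := by
      have h := integral_add_adjacent_intervals hIntab' hIntb'b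
      rw [eq1] at h
      have hnn : 0 ≤ ∫ x in b'..b, 1 / f x :=
        intervalIntegral.integral_nonneg hb'b.le
          (fun u hu => (hgpos u (hb'0.trans hu.1) (lt_of_le_of_lt hu.2 hb1)).le)
      linarith
    have eq3 : (∫ x in (0:ℝ)..b', 1 / f x) = t + ∫ x in a..b', 1 / f x := by
      rw [← integral_add_adjacent_intervals hInt0a hIntab', hGa]
    have eq4 : (∫ x in x₁..a, 1 / f x) = t - C₁ := by
      have h := integral_add_adjacent_intervals hInt0x₁ hIntx₁a
      rw [hGa, ← hC₁def] at h; linarith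
    have eq5 : (∫ x in Tx₁..b', 1 / f x) ≤ ∫ x in (0:ℝ)..b', 1 / f x := by
      have h := integral_add_adjacent_intervals hInt0T hIntTb'
      have hnn : 0 ≤ ∫ x in (0:ℝ)..Tx₁, 1 / f x :=
        intervalIntegral.integral_nonneg hT0
          (fun u hu => (hgpos u hu.1 (lt_of_le_of_lt hu.2 hT1)).le)
      linarith
    -- substitution
    have hend1 : lam * Tx₁ + (1 - lam) = x₁ := by
      rw [hTdef]; field_simp; ring
    have hend2 : lam * b' + (1 - lam) = a := by
      rw [hb'def]; field_simp; ring
    have hsubst : (∫ y in Tx₁..b', 1 / f (lam * y + (1 - lam))) = lam⁻¹ * (t - C₁) := by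
      have h := intervalIntegral.integral_comp_mul_add (a := Tx₁) (b := b')
        (fun x => 1 / f x) hlamne (1 - lam)
      rw [hend1, hend2, eq4, smul_eq_mul] at h
      exact h
    -- comp integrability
    have hcomp : IntervalIntegrable (fun y => 1 / f (lam * y + (1 - lam))) volume Tx₁ b' := by
      have h1 := (hIntx₁a.comp_add_right (1 - lam)).comp_mul_left (c := lam)
      have e1 : (x₁ - (1 - lam)) / lam = Tx₁ := by
        rw [hTdef]; field_simp; ring
      have e2 : (a - (1 - lam)) / lam = b' := by
        rw [hb'def]; field_simp; ring
      rw [e1, e2] at h1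
      exact h1
    -- pointwise inequality
    have hpt : ∀ y ∈ Icc Tx₁ b', θ * lam * (1 / f (lam * y + (1 - lam))) ≤ 1 / f y := by
      intro y hy
      obtain ⟨hy1, hy2⟩ := hy
      have hy0 : 0 ≤ y := hT0.trans hy1
      have hy1' : y < 1 := lt_of_le_of_lt hy2 hb'1
      have h1y : 0 < 1 - y := by linarith
      set x : ℝ := lam * y + (1 - lam) with hxdef
      clear_value x
      have hxx₁ : x₁ ≤ x := by
        have h := mul_le_mul_of_nonneg_left hy1 hlam0.le
        rw [hxdef, ← hend1]; linarith
      have hxa : x ≤ a := by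
        have h := mul_le_mul_of_nonneg_left hy2 hlam0.le
        rw [hxdef, ← hend2]; linarith
      have hx0 : 0 ≤ x := hx₁0.trans hxx₁
      have hx1 : x < 1 := lt_of_le_of_lt hxa ha1
      have h1x : 0 < 1 - x := by linarith
      have h1xy : 1 - x = lam * (1 - y) := by rw [hxdef]; ring
      set u : ℝ := 1 / (1 - x) with hudef
      clear_value u
      have hupos : 0 < u := by rw [hudef]; positivity
      have huu₁ : u₁ ≤ u := by
        have hle : 1 - x ≤ 1 / u₁ := by
          have h : 1 - x₁ = 1 / u₁ := by rw [hx₁def]; ring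
          linarith
        rw [hudef]
        calc u₁ = 1 / (1 / u₁) := by field_simp
        _ ≤ 1 / (1 - x) := one_div_le_one_div_of_le h1x hle
      have hu1 : 1 ≤ u := hu₁1.trans huu₁
      have hlamu : lam * u = 1 / (1 - y) := by
        rw [hudef, h1xy]; field_simp
      have hLu : 0 < L u := hLpos u hu1
      have h1lu : (1:ℝ) ≤ lam * u := by
        have h := mul_le_mul hlam1.le hu1 zero_le_one hlam0.le
        linarith
      have hLlu : 0 < L (lam * u) := hLpos _ h1lu
      have hkey2 := hLb u huu₁
      have hfy : f y = (1 - y) ^ (1 + ν) * L (lam * u) := by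
        rw [hf y hy0 hy1', hlamu]
      have hfx : f x = lam * lam ^ ν * ((1 - y) ^ (1 + ν) * L u) := by
        rw [hf x hx0 hx1, ← hudef, h1xy, Real.mul_rpow hlam0.le h1y.le,
          Real.rpow_add hlam0, Real.rpow_one]
        ring
      have hA : 0 < (1 - y) ^ (1 + ν) := Real.rpow_pos_of_pos h1y _
      have hmul : θ * L (lam * u) * ((1 - y) ^ (1 + ν) * lam)
          ≤ lam ^ ν * L u * ((1 - y) ^ (1 + ν) * lam) :=
        mul_le_mul_of_nonneg_right hkey2 (mul_nonneg hA.le hlam0.le)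
      rw [hfy, hfx, mul_one_div,
        div_le_div_iff₀ (mul_pos (mul_pos hlam0 hPpos) (mul_pos hA hLu)) (mul_pos hA hLlu)]
      calc θ * lam * ((1 - y) ^ (1 + ν) * L (lam * u))
          = θ * L (lam * u) * ((1 - y) ^ (1 + ν) * lam) := by ring
        _ ≤ lam ^ ν * L u * ((1 - y) ^ (1 + ν) * lam) := hmul
        _ = 1 * (lam * lam ^ ν * ((1 - y) ^ (1 + ν) * L u)) := by ring
    -- integral comparison
    have hmono2 : θ * lam * (lam⁻¹ * (t - C₁)) ≤ ∫ x in Tx₁..b', 1 / f x := by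
      have h1 : (∫ y in Tx₁..b', θ * lam * (1 / f (lam * y + (1 - lam))))
          ≤ ∫ x in Tx₁..b', 1 / f x :=
        intervalIntegral.integral_mono_on hTb' (hcomp.const_mul (θ * lam)) hIntTb' hpt
      rwa [intervalIntegral.integral_const_mul, hsubst] at h1
    have hfin : θ * (t - C₁) ≤ ∫ x in Tx₁..b', 1 / f x := by
      have h : θ * lam * (lam⁻¹ * (t - C₁)) = θ * (t - C₁) := by
        field_simp
      linarith [hmono2]
    linarith [hfin, eq5, eq3, eq2, hbig]
  -- conclude
  have hr1 : (1 - b) / (1 - a) ≤ 1 := by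
    rw [div_le_one h1a]; linarith
  have hrlam : 1 / lam ≤ (1 - b) / (1 - a) := by
    rw [div_le_div_iff₀ hlam0 h1a]
    have h := (div_le_iff₀ hlam0).1 hkey
    linarith
  rw [Real.dist_eq, abs_of_nonpos (by linarith)]
  have hlamε : 1 - 1 / lam < ε := by
    have h2 : (1 - ε) * lam < 1 := by
      have he : (1 - ε) * lam = 1 - ε ^ 2 := by rw [hlamdef]; ring
      have he2 : 0 < ε ^ 2 := pow_pos hε 2
      rw [he]; linarith
    have h3 : 1 - ε < 1 / lam := by rw [lt_div_iff₀ hlam0]; linarith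
    linarith
  linarith [hrlam, hlamε]
end
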